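/- Let ε > 0, let X be a standard Gaussian random variable (centered, variance 1) and let E be an independent centered Gaussian random variable of variance ε. Then P[X·(X+E) ≤ 0] ≤ 2·ε^{1/3}. -/

import Mathlib

open MeasureTheory ProbabilityTheory Real Set Filter NNReal

lemma tail_integral {b a : ℝ} (hb : 0 < b) :
    ∫ x in Set.Ioi a, x * Real.exp (-b * x ^ 2) = (2 * b)⁻¹ * Real.exp (-b * a ^ 2) := by
  have hderiv : ∀ x ∈ Set.Ici a, HasDerivAt (fun x : ℝ => -(2 * b)⁻¹ * Real.exp (-b * x ^ 2))
      (x * Real.exp (-b * x ^ 2)) x := by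
    intro x _
    have h1 : HasDerivAt (fun x : ℝ => -b * x ^ 2) (-b * (2 * x)) x := by
      simpa using ((hasDerivAt_pow 2 x).const_mul (-b))
    have h2 := (h1.exp).const_mul (-(2 * b)⁻¹)
    refine h2.congr_deriv ?_
    have hbb : (2 * b)⁻¹ * (2 * b) = 1 := inv_mul_cancel₀ (by positivity)
    linear_combination (x * Real.exp (-b * x ^ 2)) * hbb
  have hint : MeasureTheory.IntegrableOn (fun x : ℝ => x * Real.exp (-b * x ^ 2)) (Set.Ioi a) :=
    (integrable_mul_exp_neg_mul_sq hb).integrableOn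
  have h3 : Tendsto (fun x : ℝ => b * x ^ 2) atTop atTop :=
    (tendsto_pow_atTop two_ne_zero).const_mul_atTop hb
  have htend : Tendsto (fun x : ℝ => -(2 * b)⁻¹ * Real.exp (-b * x ^ 2)) atTop (nhds 0) := by
    rw [show (0:ℝ) = -(2*b)⁻¹ * 0 by ring]
    refine Filter.Tendsto.const_mul _ ?_
    refine Real.tendsto_exp_atBot.comp ?_
    simpa [neg_mul] using tendsto_neg_atBot_iff.mpr h3
  have := integral_Ioi_of_hasDerivAt_of_tendsto' hderiv hint htend
  rw [this]; ring

lemma gauss_upper_tail {v : ℝ≥0} {a : ℝ} (hv : v ≠ 0) (ha : 0 < a) :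
    (gaussianReal 0 v) {x | a ≤ x} ≤
      ENNReal.ofReal ((Real.sqrt (2 * π * v))⁻¹ * (2 * (v:ℝ) ^ 2) / a ^ 3) := by
  have hv0 : 0 < (v : ℝ) := by positivity
  set b : ℝ := (2 * (v:ℝ))⁻¹ with hbdef
  have hb : 0 < b := by rw [hbdef]; positivity
  have hset : {x : ℝ | a ≤ x} = Set.Ici a := rfl
  rw [hset, gaussianReal_apply_eq_integral (0:ℝ) hv]
  apply ENNReal.ofReal_le_ofReal
  rw [MeasureTheory.integral_Ici_eq_integral_Ioi]
  set C : ℝ := (Real.sqrt (2 * π * v))⁻¹ with hC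
  have hC0 : 0 < C := by
    rw [hC]
    exact inv_pos.mpr (Real.sqrt_pos.mpr (by positivity))
  have key : ∀ x ∈ Set.Ioi a, gaussianPDFReal 0 v x ≤ C * a⁻¹ * (x * Real.exp (-b * x ^ 2)) := by
    intro x hx
    have hax : a ≤ x := le_of_lt hx
    have hexp : Real.exp (-(x - 0) ^ 2 / (2 * (v:ℝ))) = Real.exp (-b * x ^ 2) := by
      congr 1
      rw [hbdef]
      field_simp
      ring
    rw [gaussianPDFReal, hexp]
    have h1 : 1 ≤ a⁻¹ * x := by
      rw [inv_mul_eq_div, le_div_iff₀ ha]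
      linarith
    have he : 0 < Real.exp (-b * x ^ 2) := Real.exp_pos _
    nlinarith [mul_pos hC0 he]
  have hintR : MeasureTheory.IntegrableOn
      (fun x : ℝ => C * a⁻¹ * (x * Real.exp (-b * x ^ 2))) (Set.Ioi a) :=
    (((integrable_mul_exp_neg_mul_sq hb).const_mul (C * a⁻¹))).integrableOn
  have hintL : MeasureTheory.IntegrableOn (gaussianPDFReal 0 v) (Set.Ioi a) :=
    (integrable_gaussianPDFReal 0 v).integrableOn
  calc ∫ x in Set.Ioi a, gaussianPDFReal 0 v x
      ≤ ∫ x in Set.Ioi a, C * a⁻¹ * (x * Real.exp (-b * x ^ 2)) :=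
        setIntegral_mono_on hintL hintR measurableSet_Ioi key
    _ = C * a⁻¹ * ((2 * b)⁻¹ * Real.exp (-b * a ^ 2)) := by
        rw [MeasureTheory.integral_const_mul, tail_integral hb]
    _ ≤ C * (2 * (v:ℝ) ^ 2) / a ^ 3 := by
        have h2b : (2 * b)⁻¹ = (v:ℝ) := by rw [hbdef]; field_simp
        have hu : 0 < b * a ^ 2 := by positivity
        have hexple : Real.exp (-b * a ^ 2) ≤ (b * a ^ 2)⁻¹ := by
          rw [show -b * a ^ 2 = -(b * a ^ 2) by ring, Real.exp_neg]
          exact inv_anti₀ hu ((by linarith [Real.add_one_le_exp (b * a ^ 2)]))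
        have hbinv : (b * a ^ 2)⁻¹ = 2 * (v:ℝ) / a ^ 2 := by
          rw [hbdef]; field_simp
        calc C * a⁻¹ * ((2 * b)⁻¹ * Real.exp (-b * a ^ 2))
            ≤ C * a⁻¹ * ((v:ℝ) * (2 * (v:ℝ) / a ^ 2)) := by
              rw [h2b]
              have := mul_le_mul_of_nonneg_left (hexple.trans_eq hbinv) hv0.le
              exact mul_le_mul_of_nonneg_left this (by positivity)
          _ = C * (2 * (v:ℝ) ^ 2) / a ^ 3 := by field_simp

lemma gauss_central {a : ℝ} (ha : 0 ≤ a) :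
    (gaussianReal 0 1) {x | |x| ≤ a} ≤ ENNReal.ofReal (4 / 5 * a) := by
  have hset : {x : ℝ | |x| ≤ a} = Set.Icc (-a) a := by
    ext x; simp [abs_le]
  rw [hset, gaussianReal_apply_eq_integral (0:ℝ) one_ne_zero]
  apply ENNReal.ofReal_le_ofReal
  have hsqrt : (2.5 : ℝ) ≤ Real.sqrt (2 * π * ((1:ℝ≥0):ℝ)) := by
    rw [Real.le_sqrt' (by norm_num)]
    have := Real.pi_gt_d6
    push_cast
    nlinarith
  have hpdf : ∀ x ∈ Set.Icc (-a) a, gaussianPDFReal 0 1 x ≤ 2 / 5 := by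
    intro x _
    rw [gaussianPDFReal]
    have h1 : Real.exp (-(x - 0) ^ 2 / (2 * ((1:ℝ≥0):ℝ))) ≤ 1 := by
      rw [Real.exp_le_one_iff]
      push_cast
      nlinarith [sq_nonneg (x - 0)]
    have h2 : (Real.sqrt (2 * π * ((1:ℝ≥0):ℝ)))⁻¹ ≤ 2 / 5 := by
      rw [inv_le_comm₀ (by linarith) (by norm_num)] <;> linarith
    calc (Real.sqrt (2 * π * ((1:ℝ≥0):ℝ)))⁻¹ * Real.exp (-(x - 0) ^ 2 / (2 * ((1:ℝ≥0):ℝ)))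
        ≤ (Real.sqrt (2 * π * ((1:ℝ≥0):ℝ)))⁻¹ * 1 :=
          mul_le_mul_of_nonneg_left h1 (by positivity)
      _ ≤ 2 / 5 := by rw [mul_one]; exact h2
  calc ∫ x in Set.Icc (-a) a, gaussianPDFReal 0 1 x
      ≤ ∫ _x in Set.Icc (-a) a, (2 / 5 : ℝ) :=
        setIntegral_mono_on (integrable_gaussianPDFReal 0 1).integrableOn
          (integrableOn_const measure_Icc_lt_top.ne) measurableSet_Icc hpdf
    _ = (volume (Set.Icc (-a) a)).toReal * (2 / 5) := by rw [setIntegral_const, smul_eq_mul, measureReal_def]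
    _ ≤ 4 / 5 * a := by
        rw [Real.volume_Icc, ENNReal.toReal_ofReal (by linarith)]
        ring_nf
        linarith

lemma gauss_symm {v : ℝ≥0} (a : ℝ) :
    (gaussianReal 0 v) {x | x ≤ -a} = (gaussianReal 0 v) {x | a ≤ x} := by
  have h1 : (⟨(-1:ℝ)^2, sq_nonneg _⟩ : ℝ≥0) = 1 := by ext; norm_num
  have hmap : (gaussianReal 0 v).map (fun x => (-1:ℝ) * x) = gaussianReal 0 v := by
    rw [show (fun x => (-1:ℝ) * x) = ((-1:ℝ) * ·) by rfl, gaussianReal_map_const_mul (-1:ℝ)]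
    congr 1
    · norm_num
    · ext; simp
  have hset : {x : ℝ | x ≤ -a} = Set.Iic (-a) := rfl
  conv_lhs => rw [← hmap]
  rw [hset, Measure.map_apply (by fun_prop) measurableSet_Iic]
  congr 1
  ext x
  simp only [Set.mem_preimage, Set.mem_Iic, Set.mem_setOf_eq]
  constructor <;> intro h <;> linarith

theorem gaussian_perturbation_sign_change
    {Ω : Type*} [MeasurableSpace Ω] (μ : Measure Ω) [IsProbabilityMeasure μ]
    (ε : ℝ) (hε : 0 < ε)
    (X E : Ω → ℝ) (hX : Measurable X) (hE : Measurable E)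
    (hXlaw : μ.map X = gaussianReal 0 1)
    (hElaw : μ.map E = gaussianReal 0 ε.toNNReal)
    (hindep : IndepFun X E μ) :
    (μ {ω | X ω * (X ω + E ω) ≤ 0}).toReal ≤ 2 * ε ^ ((1 : ℝ) / 3) := by
  set δ : ℝ := ε ^ ((1:ℝ)/3) with hδdef
  have hδ : 0 < δ := Real.rpow_pos_of_pos hε _
  by_cases hbig : 1/8 ≤ ε
  · -- trivial case
    have h18 : ((1/8 : ℝ)) ^ ((1:ℝ)/3) = 1/2 := by
      rw [show (1/8:ℝ) = (1/2:ℝ)^(3:ℕ) by norm_num, ← Real.rpow_natCast ((1/2):ℝ) 3,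
        ← Real.rpow_mul (by norm_num : (0:ℝ) ≤ 1/2)]
      norm_num
    have hge : (1/2 : ℝ) ≤ δ := by
      rw [← h18]
      exact Real.rpow_le_rpow (by norm_num) hbig (by norm_num)
    have h1 : (μ {ω | X ω * (X ω + E ω) ≤ 0}).toReal ≤ 1 := by
      calc (μ {ω | X ω * (X ω + E ω) ≤ 0}).toReal
          ≤ (1 : ENNReal).toReal := ENNReal.toReal_mono ENNReal.one_ne_top prob_le_one
        _ = 1 := ENNReal.toReal_one
    linarith
  · push_neg at hbig
    set v : ℝ≥0 := ε.toNNReal with hvdef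
    have hvε : (v : ℝ) = ε := Real.coe_toNNReal ε hε.le
    have hv : v ≠ 0 := by
      simp only [hvdef, ne_eq, Real.toNNReal_eq_zero, not_le]
      exact hε
    -- inclusion
    have hsub : {ω | X ω * (X ω + E ω) ≤ 0} ⊆
        {ω | |X ω| ≤ δ} ∪ {ω | δ ≤ |E ω|} := by
      intro ω hω
      simp only [Set.mem_setOf_eq, Set.mem_union]
      by_contra h
      push_neg at h
      obtain ⟨h1, h2⟩ := h
      simp only [Set.mem_setOf_eq] at hω
      rcases abs_cases (X ω) with ⟨ha1, ha2⟩ | ⟨ha1, ha2⟩ <;>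
        rcases abs_cases (E ω) with ⟨hb1, hb2⟩ | ⟨hb1, hb2⟩ <;> nlinarith
    have hmeas1 : MeasurableSet {x : ℝ | |x| ≤ δ} :=
      measurableSet_Iic.preimage measurable_id.abs
    have hmeas2 : MeasurableSet {x : ℝ | δ ≤ |x|} :=
      measurableSet_Ici.preimage measurable_id.abs
    -- bound for X
    have hXbound : μ {ω | |X ω| ≤ δ} ≤ ENNReal.ofReal (4/5 * δ) := by
      have : μ {ω | |X ω| ≤ δ} = (μ.map X) {x | |x| ≤ δ} := by
        rw [Measure.map_apply hX hmeas1]; rfl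
      rw [this, hXlaw]
      exact gauss_central hδ.le
    -- bound for E
    set T : ℝ := (Real.sqrt (2 * π * ε))⁻¹ * (2 * ε ^ 2) / δ ^ 3 with hTdef
    have hEbound : μ {ω | δ ≤ |E ω|} ≤ ENNReal.ofReal (T + T) := by
      have hEmap : μ {ω | δ ≤ |E ω|} = (gaussianReal 0 v) {x | δ ≤ |x|} := by
        rw [show {ω | δ ≤ |E ω|} = E ⁻¹' {x | δ ≤ |x|} by rfl,
          ← Measure.map_apply hE hmeas2, hElaw]
      have hsub2 : {x : ℝ | δ ≤ |x|} ⊆ {x : ℝ | x ≤ -δ} ∪ {x : ℝ | δ ≤ x} := by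
        intro x hx
        simp only [Set.mem_setOf_eq, Set.mem_union] at *
        rcases abs_cases x with ⟨h1, _⟩ | ⟨h1, _⟩
        · right; linarith
        · left; linarith
      have htail : (gaussianReal 0 v) {x | δ ≤ x} ≤ ENNReal.ofReal T := by
        have := gauss_upper_tail hv hδ
        rwa [hvε, ← hTdef] at this
      calc μ {ω | δ ≤ |E ω|}
          = (gaussianReal 0 v) {x | δ ≤ |x|} := hEmap
        _ ≤ (gaussianReal 0 v) {x | x ≤ -δ} + (gaussianReal 0 v) {x | δ ≤ x} :=
            (measure_mono hsub2).trans (measure_union_le _ _)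
        _ = (gaussianReal 0 v) {x | δ ≤ x} + (gaussianReal 0 v) {x | δ ≤ x} := by
            rw [gauss_symm]
        _ ≤ ENNReal.ofReal T + ENNReal.ofReal T := add_le_add htail htail
        _ = ENNReal.ofReal (T + T) := by
            rw [ENNReal.ofReal_add] <;> · rw [hTdef]; positivity
    -- numeric facts
    have hδ3 : δ ^ (3:ℕ) = ε := by
      rw [hδdef, ← Real.rpow_natCast (ε ^ ((1:ℝ)/3)) 3, ← Real.rpow_mul hε.le]
      norm_num
    set s : ℝ := Real.sqrt ε with hsdef
    have hs0 : 0 < s := Real.sqrt_pos.mpr hε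
    have hs2 : s ^ 2 = ε := Real.sq_sqrt hε.le
    have hsδ : s ≤ 3/4 * δ := by
      have hsr : s = ε ^ ((1:ℝ)/2) := Real.sqrt_eq_rpow ε
      have hsplit : ε ^ ((1:ℝ)/2) = δ * ε ^ ((1:ℝ)/6) := by
        rw [hδdef, ← Real.rpow_add hε]
        norm_num
      have h16 : ε ^ ((1:ℝ)/6) ≤ 3/4 := by
        have hle : ε ^ ((1:ℝ)/6) ≤ (1/8 : ℝ) ^ ((1:ℝ)/6) :=
          Real.rpow_le_rpow hε.le hbig.le (by norm_num)
        have h6 : ((1/8:ℝ) ^ ((1:ℝ)/6)) ^ (6:ℕ) = 1/8 := by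
          rw [← Real.rpow_natCast ((1/8:ℝ) ^ ((1:ℝ)/6)) 6, ← Real.rpow_mul (by norm_num)]
          norm_num
        have h86 : (1/8:ℝ) ^ ((1:ℝ)/6) ≤ 3/4 := by
          by_contra hcon
          push_neg at hcon
          have h7 : ((3/4:ℝ)) ^ (6:ℕ) < ((1/8:ℝ) ^ ((1:ℝ)/6)) ^ (6:ℕ) :=
            pow_lt_pow_left₀ hcon (by norm_num) (by norm_num)
          rw [h6] at h7
          norm_num at h7
        linarith
      calc s = δ * ε ^ ((1:ℝ)/6) := by rw [hsr, hsplit]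
        _ ≤ δ * (3/4) := mul_le_mul_of_nonneg_left h16 hδ.le
        _ = 3/4 * δ := by ring
    have hQ : 5/2 * s ≤ Real.sqrt (2 * π * ε) := by
      rw [show 2 * π * ε = (2 * π) * ε by ring, Real.sqrt_mul (by positivity) ε, ← hsdef]
      have h2pi : (5/2 : ℝ) ≤ Real.sqrt (2 * π) := by
        rw [Real.le_sqrt' (by norm_num)]
        nlinarith [Real.pi_gt_d6]
      nlinarith
    have hT : T ≤ 4/5 * s := by
      have hQ0 : 0 < Real.sqrt (2 * π * ε) := by positivity
      have hinv : (Real.sqrt (2 * π * ε))⁻¹ ≤ (5/2 * s)⁻¹ :=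
        inv_anti₀ (by positivity) hQ
      have : T ≤ (5/2 * s)⁻¹ * (2 * ε ^ 2) / δ ^ 3 := by
        rw [hTdef]
        gcongr
      rw [hδ3] at this
      have heq : (5/2 * s)⁻¹ * (2 * ε ^ 2) / ε = 4/5 * s := by
        rw [← hs2]
        field_simp
        ring
      linarith [this, heq ▸ this]
    -- assemble
    have htotal : μ {ω | X ω * (X ω + E ω) ≤ 0} ≤ ENNReal.ofReal (4/5 * δ + (T + T)) := by
      calc μ {ω | X ω * (X ω + E ω) ≤ 0}
          ≤ μ ({ω | |X ω| ≤ δ} ∪ {ω | δ ≤ |E ω|}) := measure_mono hsub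
        _ ≤ μ {ω | |X ω| ≤ δ} + μ {ω | δ ≤ |E ω|} := measure_union_le _ _
        _ ≤ ENNReal.ofReal (4/5 * δ) + ENNReal.ofReal (T + T) := add_le_add hXbound hEbound
        _ = ENNReal.ofReal (4/5 * δ + (T + T)) :=
            (ENNReal.ofReal_add (by positivity) (by rw [hTdef]; positivity)).symm
    have hfinal : 4/5 * δ + (T + T) ≤ 2 * δ := by nlinarith
    calc (μ {ω | X ω * (X ω + E ω) ≤ 0}).toReal
        ≤ (ENNReal.ofReal (4/5 * δ + (T + T))).toReal :=
          ENNReal.toReal_mono ENNReal.ofReal_ne_top htotal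
      _ = 4/5 * δ + (T + T) := ENNReal.toReal_ofReal (by
            have hT0 : (0:ℝ) ≤ T := by rw [hTdef]; positivity
            linarith)
      _ ≤ 2 * δ := hfinal
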